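/- Let S be a set, let σ : S → S be a bijection, let m ≥ 1, let T_1, …, T_m be subsets of S, let d ∈ ℕ, and let a ∈ {1,…,m}. Assume: (H1) for every i with d+2 ≤ i ≤ m there exists ℓ ∈ {1,…,d+1} such that T_i ⊆ σ^ℓ(T_{i−ℓ}), where σ^ℓ denotes the ℓ-fold composition of σ and σ^ℓ(T) the image of T under σ^ℓ; and (H2) for every i with a+1 ≤ i ≤ min(a+d, m), T_i ⊆ σ(T_{i−1}). Then for every i with 0 ≤ i ≤ m−a, T_{a+i} ⊆ σ^i(T_a). -/

import Mathlib

/-- Claim 6 in the proof of Lemma 4.2, in abstract form: let `σ : S → S` be a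
bijection and `T_1,…,T_m ⊆ S`. Assume (H1) for every `i` with `d+2 ≤ i ≤ m` there
is `l ∈ {1,…,d+1}` with `T_i ⊆ σ^l(T_{i−l})`, and (H2) `T_i ⊆ σ(T_{i−1})` for all
`i` with `a+1 ≤ i ≤ min(a+d, m)`. Then `T_{a+i} ⊆ σ^i(T_a)` for all `0 ≤ i ≤ m−a`. -/
theorem stmt9 {S : Type*} (σ : S → S) (hσ : Function.Bijective σ)
    (m : ℕ) (hm : 1 ≤ m) (T : ℕ → Set S) (d a : ℕ)
    (ha1 : 1 ≤ a) (ha2 : a ≤ m)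
    (H1 : ∀ i, d + 2 ≤ i → i ≤ m →
      ∃ l, 1 ≤ l ∧ l ≤ d + 1 ∧ T i ⊆ σ^[l] '' T (i - l))
    (H2 : ∀ i, a + 1 ≤ i → i ≤ min (a + d) m → T i ⊆ σ '' T (i - 1)) :
    ∀ i, i ≤ m - a → T (a + i) ⊆ σ^[i] '' T a := by
  intro i
  induction i using Nat.strong_induction_on with
  | _ i ih =>
    intro hi
    rcases Nat.eq_zero_or_pos i with rfl | hpos
    · simp
    by_cases hd : i ≤ d
    · obtain ⟨j, rfl⟩ : ∃ j, i = j + 1 := ⟨i - 1, by omega⟩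
      have h2 := H2 (a + (j + 1)) (by omega) (Nat.le_min.mpr ⟨by omega, by omega⟩)
      have heq : a + (j + 1) - 1 = a + j := by omega
      rw [heq] at h2
      have hih := ih j (by omega) (by omega)
      rw [Function.iterate_succ', Set.image_comp]
      exact h2.trans (Set.image_mono hih)
    · obtain ⟨l, hl1, hl2, hsub⟩ := H1 (a + i) (by omega) (by omega)
      have hli : l ≤ i := by omega
      have heq : a + i - l = a + (i - l) := by omega
      rw [heq] at hsub
      have hih := ih (i - l) (by omega) (by omega)
      calc T (a + i) ⊆ σ^[l] '' T (a + (i - l)) := hsub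
        _ ⊆ σ^[l] '' (σ^[i-l] '' T a) := Set.image_mono hih
        _ = σ^[i] '' T a := by
            conv_rhs => rw [← Nat.add_sub_cancel' hli, Function.iterate_add, Set.image_comp]
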